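/- If φ: ℝ^m → ℝ has continuous second partial derivatives and all mixed second partial derivatives ∂²φ/∂x_i∂x_j for i ≠ j are nonnegative, then φ is superadditive, i.e., φ(x ⊔ y) + φ(x ⊓ y) ≥ φ(x) + φ(y) for all x, y ∈ ℝ^m, where ⊔ and ⊓ denote componentwise maximum and minimum. -/

import Mathlib

open Filter

/-- A function `φ : ℝ^m → ℝ` is superadditive if
`φ(x ⊔ y) + φ(x ⊓ y) ≥ φ(x) + φ(y)` for all `x, y`, componentwise max/min. -/
def Superadditive {m : ℕ} (φ : (Fin m → ℝ) → ℝ) : Prop :=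
  ∀ x y : Fin m → ℝ, φ x + φ y ≤ φ (x ⊔ y) + φ (x ⊓ y)

section Aux

variable {m : ℕ} {φ : (Fin m → ℝ) → ℝ}

private lemma fderiv_apply_eq (hsmooth : ContDiff ℝ 2 φ) (x v w : Fin m → ℝ) :
    fderiv ℝ (fun y => fderiv ℝ φ y v) x w = fderiv ℝ (fderiv ℝ φ) x w v := by
  have hf' : Differentiable ℝ (fderiv ℝ φ) :=
    (hsmooth.fderiv_right (m := 1) (by norm_num)).differentiable one_ne_zero
  have h : HasFDerivAt (fun y => fderiv ℝ φ y v)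
      ((ContinuousLinearMap.apply ℝ ℝ v).comp (fderiv ℝ (fderiv ℝ φ) x)) x :=
    (ContinuousLinearMap.apply ℝ ℝ v).hasFDerivAt.comp x (hf' x).hasFDerivAt
  rw [h.fderiv]
  rfl

private lemma bilin_nonneg (hsmooth : ContDiff ℝ 2 φ)
    (hmixed : ∀ x : Fin m → ℝ, ∀ i j : Fin m, i ≠ j →
      0 ≤ fderiv ℝ (fun y => fderiv ℝ φ y (Pi.single i (1 : ℝ))) x (Pi.single j (1 : ℝ)))
    (x v w : Fin m → ℝ) (hv : 0 ≤ v) (hw : 0 ≤ w)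
    (hdisj : ∀ i, v i ≠ 0 → w i = 0) :
    0 ≤ fderiv ℝ (fderiv ℝ φ) x w v := by
  have hv' : v = ∑ i : Fin m, v i • (Pi.single i (1 : ℝ) : Fin m → ℝ) := by
    ext j; simp [Pi.single_apply, Finset.sum_apply]
  have hw' : w = ∑ j : Fin m, w j • (Pi.single j (1 : ℝ) : Fin m → ℝ) := by
    ext k; simp [Pi.single_apply, Finset.sum_apply]
  calc (0 : ℝ) ≤ ∑ j : Fin m, ∑ i : Fin m,
        w j * (v i * fderiv ℝ (fderiv ℝ φ) x (Pi.single j 1) (Pi.single i 1)) := by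
        apply Finset.sum_nonneg; intro j _
        apply Finset.sum_nonneg; intro i _
        rcases eq_or_ne i j with rfl | hij
        · rcases eq_or_ne (v i) 0 with h0 | h0
          · simp [h0]
          · simp [hdisj i h0]
        · have := hmixed x i j hij
          rw [fderiv_apply_eq hsmooth] at this
          exact mul_nonneg (hw j) (mul_nonneg (hv i) this)
    _ = fderiv ℝ (fderiv ℝ φ) x w v := by
        conv_rhs => rw [hv', hw']
        rw [map_sum]
        simp only [map_sum, map_smul, ContinuousLinearMap.coe_sum', Finset.sum_apply,
          ContinuousLinearMap.coe_smul', Pi.smul_apply, ContinuousLinearMap.smul_apply,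
          smul_eq_mul]
        rw [Finset.sum_comm]
        refine Finset.sum_congr rfl fun i _ => ?_
        rw [Finset.mul_sum]
        exact Finset.sum_congr rfl fun j _ => by ring

/-- derivative-direction monotonicity: shifting base point by `d` increases
the directional derivative in direction `e`. -/
private lemma dirDeriv_mono (hsmooth : ContDiff ℝ 2 φ)
    (hmixed : ∀ x : Fin m → ℝ, ∀ i j : Fin m, i ≠ j →
      0 ≤ fderiv ℝ (fun y => fderiv ℝ φ y (Pi.single i (1 : ℝ))) x (Pi.single j (1 : ℝ)))
    (p d e : Fin m → ℝ) (hd : 0 ≤ d) (he : 0 ≤ e)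
    (hdisj : ∀ i, e i ≠ 0 → d i = 0) :
    fderiv ℝ φ p e ≤ fderiv ℝ φ (p + d) e := by
  have hf' : Differentiable ℝ (fderiv ℝ φ) :=
    (hsmooth.fderiv_right (m := 1) (by norm_num)).differentiable one_ne_zero
  set h : ℝ → ℝ := fun s => fderiv ℝ φ (p + s • d) e with hh
  have hline : ∀ s : ℝ, HasDerivAt (fun s : ℝ => p + s • d) d s := by
    intro s
    simpa using ((hasDerivAt_id s).smul_const d).const_add p
  have hder : ∀ s : ℝ, HasDerivAt h (fderiv ℝ (fderiv ℝ φ) (p + s • d) d e) s := by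
    intro s
    have hG : HasFDerivAt (fun y => fderiv ℝ φ y e)
        ((ContinuousLinearMap.apply ℝ ℝ e).comp (fderiv ℝ (fderiv ℝ φ) (p + s • d))) (p + s • d) :=
      (ContinuousLinearMap.apply ℝ ℝ e).hasFDerivAt.comp _ (hf' _).hasFDerivAt
    exact hG.comp_hasDerivAt s (hline s)
  have hmono : Monotone h := by
    apply monotone_of_deriv_nonneg
    · exact fun s => (hder s).differentiableAt
    · intro s
      rw [(hder s).deriv]
      exact bilin_nonneg hsmooth hmixed _ e d he hd hdisj
  have := hmono (show (0:ℝ) ≤ 1 by norm_num)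
  simpa [hh] using this

private lemma key_ineq (hsmooth : ContDiff ℝ 2 φ)
    (hmixed : ∀ x : Fin m → ℝ, ∀ i j : Fin m, i ≠ j →
      0 ≤ fderiv ℝ (fun y => fderiv ℝ φ y (Pi.single i (1 : ℝ))) x (Pi.single j (1 : ℝ)))
    (u d c : Fin m → ℝ) (hd : 0 ≤ d) (hc : 0 ≤ c)
    (hdisj : ∀ i, d i ≠ 0 → c i = 0) :
    φ (u + d) - φ u ≤ φ (u + c + d) - φ (u + c) := by
  have hdiff : Differentiable ℝ φ := hsmooth.differentiable (by norm_num)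
  set g : ℝ → ℝ := fun t => φ (u + t • c + d) - φ (u + t • c) with hg
  have hder : ∀ t : ℝ, HasDerivAt g
      (fderiv ℝ φ (u + t • c + d) c - fderiv ℝ φ (u + t • c) c) t := by
    intro t
    have hline1 : HasDerivAt (fun t : ℝ => u + t • c + d) c t := by
      simpa using (((hasDerivAt_id t).smul_const c).const_add u).add_const d
    have hline2 : HasDerivAt (fun t : ℝ => u + t • c) c t := by
      simpa using ((hasDerivAt_id t).smul_const c).const_add u
    exact ((hdiff _).hasFDerivAt.comp_hasDerivAt t hline1).sub
      ((hdiff _).hasFDerivAt.comp_hasDerivAt t hline2)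
  have hmono : Monotone g := by
    apply monotone_of_deriv_nonneg
    · exact fun t => (hder t).differentiableAt
    · intro t
      rw [(hder t).deriv]
      have := dirDeriv_mono hsmooth hmixed (u + t • c) d c hd hc
        (fun i hci => by by_contra h; exact hci (hdisj i h))
      linarith [this]
  have := hmono (show (0:ℝ) ≤ 1 by norm_num)
  simpa [hg] using this

end Aux

/-- If `φ : ℝ^m → ℝ` has continuous second partial derivatives and all mixed
second partials `∂²φ/∂x_i∂x_j`, `i ≠ j`, are nonnegative, then `φ` is superadditive. -/
theorem superadditive_of_nonneg_mixed_partials {m : ℕ} (φ : (Fin m → ℝ) → ℝ)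
    (hsmooth : ContDiff ℝ 2 φ)
    (hmixed : ∀ x : Fin m → ℝ, ∀ i j : Fin m, i ≠ j →
      0 ≤ fderiv ℝ (fun y => fderiv ℝ φ y (Pi.single i (1 : ℝ))) x (Pi.single j (1 : ℝ))) :
    Superadditive φ := by
  intro x y
  set u : Fin m → ℝ := x ⊓ y with hu
  set d : Fin m → ℝ := x - (x ⊓ y) with hdd
  set c : Fin m → ℝ := y - (x ⊓ y) with hcc
  have hd : 0 ≤ d := by
    intro i; simp [hdd, hu, min_le_left]
  have hc : 0 ≤ c := by
    intro i; simp [hcc, min_le_right]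
  have hdisj : ∀ i, d i ≠ 0 → c i = 0 := by
    intro i hdi
    have h1 : min (x i) (y i) = y i := by
      by_contra h
      have : min (x i) (y i) = x i := by
        rcases min_cases (x i) (y i) with ⟨h1, _⟩ | ⟨h1, _⟩ <;> [exact h1; exact absurd h1 h]
      exact hdi (by simp [hdd, Pi.sub_apply, Pi.inf_apply, this])
    simp [hcc, Pi.sub_apply, Pi.inf_apply, h1]
  have h1 : u + d = x := by rw [hu, hdd]; abel
  have h2 : u + c = y := by rw [hu, hcc]; abel
  have h3 : u + c + d = x ⊔ y := by
    have he : u + c + d = x + y - x ⊓ y := by rw [hu, hcc, hdd]; abel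
    rw [he]
    ext i
    simp only [Pi.sub_apply, Pi.add_apply, Pi.inf_apply, Pi.sup_apply]
    rcases le_total (x i) (y i) with h | h
    · rw [min_eq_left h, max_eq_right h]; ring
    · rw [min_eq_right h, max_eq_left h]; ring
  have key := key_ineq hsmooth hmixed u d c hd hc hdisj
  rw [h3, h1, h2] at key
  have h4 : u = x ⊓ y := hu
  linarith [key]
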